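/- Let $I = (x_0^d, \ldots, x_{n-1}^d, m_1, \ldots, m_r)$ be a monomial ideal in $k[x_0,\ldots,x_{n-1}]$ with $\deg(m_j) \le d$ for each $j$. Then $\dim_k k[x_0,\ldots,x_{n-1}]/I = \dim_k k[x_0,\ldots,x_{n-1}]/(\phi_n(x_0^d),\ldots,\phi_n(x_{n-1}^d), \phi_n(m_1),\ldots,\phi_n(m_r))$. -/

import Mathlib

open MvPolynomial

/-- The map `φₙ` sending a monomial with exponent vector `e` to
`∏ i ∏_{j=1}^{e i} (xᵢ - j)`. -/
noncomputable def phi (n : ℕ) (e : Fin n → ℕ) : MvPolynomial (Fin n) ℂ :=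
  ∏ i, ∏ j ∈ Finset.range (e i), (X i - C ((j : ℂ) + 1))

namespace Stmt7Aux

noncomputable def F (n : ℕ) : (Fin n → ℕ) → (Fin n →₀ ℕ) := Finsupp.equivFunOnFinite.symm

@[simp] lemma F_apply (n : ℕ) (e : Fin n → ℕ) (i : Fin n) : (F n e) i = e i := rfl

variable (n d r : ℕ) (m : Fin r → (Fin n → ℕ))

/-- exponent vectors of the generators -/
def gexp : Fin n ⊕ Fin r → (Fin n → ℕ) :=
  Sum.elim (fun i i' => if i' = i then d else 0) m

open Classical in
/-- standard monomial exponents -/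
noncomputable def EStd : Finset (Fin n → ℕ) :=
  (Fintype.piFinset fun _ => Finset.range d).filter
    (fun e => ∀ j, ∃ i, e i < m j i)

lemma mem_EStd {e : Fin n → ℕ} :
    e ∈ EStd n d r m ↔ (∀ i, e i < d) ∧ ∀ j, ∃ i, e i < m j i := by
  simp [EStd, Fintype.mem_piFinset]

lemma exists_gexp_le {u : Fin n → ℕ} (h : u ∉ EStd n d r m) :
    ∃ g, ∀ i, gexp n d r m g i ≤ u i := by
  rw [mem_EStd] at h; push_neg at h
  by_cases hd : ∀ i, u i < d
  · obtain ⟨j, hj⟩ := h hd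
    exact ⟨Sum.inr j, fun i => hj i⟩
  · push_neg at hd; obtain ⟨i, hi⟩ := hd
    refine ⟨Sum.inl i, fun i' => ?_⟩
    by_cases hii : i' = i
    · subst hii; simpa [gexp] using hi
    · simp [gexp, hii]

lemma Ssum (u : Fin n →₀ ℕ) : (u.sum fun _ k => k) = ∑ i, u i :=
  Finsupp.sum_fintype _ _ (fun _ => rfl)

lemma deg_monomial_le (u : Fin n →₀ ℕ) (c : ℂ) :
    (monomial u c).totalDegree ≤ ∑ i, u i := by
  rw [← Ssum]; exact totalDegree_monomial_le _ _

lemma prod_X_sub_C {α : Type} [DecidableEq α] (s : Finset α) (v : α → Fin n) (c : α → ℂ) :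
    ∃ D : MvPolynomial (Fin n) ℂ,
      (∏ p ∈ s, (X (v p) - C (c p))) = (∏ p ∈ s, X (v p)) + D ∧
      (D = 0 ∨ D.totalDegree < s.card) := by
  induction s using Finset.induction_on with
  | empty => exact ⟨0, by simp⟩
  | insert a s ha IH0 =>
    obtain ⟨D, hD, hdeg⟩ := IH0
    have hprodX : (∏ p ∈ s, (X (v p) : MvPolynomial (Fin n) ℂ)).totalDegree ≤ s.card := by
      calc (∏ p ∈ s, (X (v p) : MvPolynomial (Fin n) ℂ)).totalDegree
          ≤ ∑ p ∈ s, (X (v p) : MvPolynomial (Fin n) ℂ).totalDegree :=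
            totalDegree_finset_prod _ _
        _ ≤ ∑ _p ∈ s, 1 := by
            apply Finset.sum_le_sum; intro p _; exact (totalDegree_X _).le
        _ = s.card := by simp
    refine ⟨-(C (c a) * ∏ p ∈ s, X (v p)) + (X (v a) - C (c a)) * D, ?_, Or.inr ?_⟩
    · rw [Finset.prod_insert ha, Finset.prod_insert ha, hD]; ring
    · rw [Finset.card_insert_of_notMem ha]
      have h1 : (-(C (c a) * ∏ p ∈ s, (X (v p) : MvPolynomial (Fin n) ℂ))).totalDegree ≤ s.card := by
        rw [totalDegree_neg]
        calc (C (c a) * ∏ p ∈ s, (X (v p) : MvPolynomial (Fin n) ℂ)).totalDegree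
            ≤ (C (c a)).totalDegree + _ := totalDegree_mul _ _
          _ ≤ 0 + s.card := by
              exact add_le_add (totalDegree_C _).le hprodX
          _ = s.card := by omega
      have h2 : ((X (v a) - C (c a)) * D).totalDegree ≤ s.card := by
        rcases hdeg with rfl | hlt
        · simp
        · calc ((X (v a) - C (c a)) * D).totalDegree
              ≤ (X (v a) - C (c a)).totalDegree + D.totalDegree := totalDegree_mul _ _
            _ ≤ 1 + D.totalDegree := by
                have : ((X (v a) : MvPolynomial (Fin n) ℂ) - C (c a)).totalDegree ≤ 1 := by
                  apply le_trans (totalDegree_sub _ _)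
                  simp [totalDegree_X]
                omega
            _ ≤ s.card := by omega
      calc (-(C (c a) * ∏ p ∈ s, X (v p)) + (X (v a) - C (c a)) * D).totalDegree
          ≤ max _ _ := totalDegree_add _ _
        _ ≤ s.card := max_le h1 h2
        _ < s.card + 1 := Nat.lt_succ_self _

lemma monomial_sigma (e : Fin n → ℕ) :
    (monomial (F n e) (1 : ℂ)) =
      ∏ p ∈ Finset.univ.sigma (fun i => Finset.range (e i)), (X p.1 : MvPolynomial (Fin n) ℂ) := by
  rw [Finset.prod_sigma (Finset.univ : Finset (Fin n)) (fun i => Finset.range (e i))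
      (fun p => (X p.1 : MvPolynomial (Fin n) ℂ))]
  calc (monomial (F n e) (1 : ℂ))
      = ∏ x ∈ (F n e).support, X x ^ (F n e) x := prod_X_pow_eq_monomial.symm
    _ = ∏ x : Fin n, X x ^ (F n e) x := by
        apply Finset.prod_subset (Finset.subset_univ _)
        intro i _ hi
        have h0 : (F n e) i = 0 := Finsupp.notMem_support_iff.mp hi
        simp [h0]
    _ = ∏ x : Fin n, ∏ _j ∈ Finset.range (e x), X x := by
        simp [Finset.prod_const]

lemma phi_decomp (e : Fin n → ℕ) :
    ∃ D, phi n e = monomial (F n e) 1 + D ∧ (D = 0 ∨ D.totalDegree < ∑ i, e i) := by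
  obtain ⟨D, h1, h2⟩ := prod_X_sub_C n (Finset.univ.sigma (fun i => Finset.range (e i)))
    (fun p => p.1) (fun p => (p.2 : ℂ) + 1)
  have hcard : (Finset.univ.sigma (fun i => Finset.range (e i))).card = ∑ i, e i := by
    rw [Finset.card_sigma]; simp
  refine ⟨D, ?_, ?_⟩
  · have hphi : phi n e = ∏ p ∈ Finset.univ.sigma (fun i => Finset.range (e i)),
        (X p.1 - C ((p.2 : ℂ) + 1)) :=
      (Finset.prod_sigma (Finset.univ : Finset (Fin n)) (fun i => Finset.range (e i))
        (fun p => (X p.1 - C ((p.2 : ℂ) + 1)))).symm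
    rw [hphi, h1, monomial_sigma]
  · rw [← hcard]; exact h2

lemma range_sum {β : Type*} (f : Fin n ⊕ Fin r → β) :
    Set.range (f ∘ Sum.inl) ∪ Set.range (f ∘ Sum.inr) = Set.range f := by
  exact (Sum.range_eq f).symm

def pts (e : Fin n → ℕ) : Fin n → ℂ := fun i => (e i : ℂ) + 1

lemma eval_phi (a : Fin n → ℂ) (e : Fin n → ℕ) :
    eval a (phi n e) = ∏ i, ∏ j ∈ Finset.range (e i), (a i - ((j : ℂ) + 1)) := by
  simp [phi]

lemma eval_gen_zero {e : Fin n → ℕ} (he : e ∈ EStd n d r m) (g : Fin n ⊕ Fin r) :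
    eval (pts n e) (phi n (gexp n d r m g)) = 0 := by
  rw [mem_EStd] at he
  rw [eval_phi]
  cases g with
  | inl i =>
    apply Finset.prod_eq_zero (Finset.mem_univ i)
    refine Finset.prod_eq_zero (i := e i) ?_ ?_
    · simp only [gexp, Sum.elim_inl, if_pos rfl, Finset.mem_range]
      exact he.1 i
    · simp [pts]
  | inr j =>
    obtain ⟨i, hi⟩ := he.2 j
    apply Finset.prod_eq_zero (Finset.mem_univ i)
    refine Finset.prod_eq_zero (i := e i) ?_ ?_
    · simpa [gexp] using hi
    · simp [pts]

lemma eval_phi_ne_zero (e : Fin n → ℕ) : eval (pts n e) (phi n e) ≠ 0 := by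
  rw [eval_phi]
  rw [Finset.prod_ne_zero_iff]
  intro i _
  rw [Finset.prod_ne_zero_iff]
  intro j hj
  have hj' : j < e i := Finset.mem_range.mp hj
  simp only [pts]
  intro h
  have h2 : (e i : ℂ) = (j : ℂ) := by linear_combination h
  have := Nat.cast_inj (R := ℂ).mp h2
  omega

lemma eval_phi_zero_of_not_le {e e' : Fin n → ℕ} (h : ¬ ∀ i, e i ≤ e' i) :
    eval (pts n e') (phi n e) = 0 := by
  push_neg at h; obtain ⟨i, hi⟩ := h
  rw [eval_phi]
  apply Finset.prod_eq_zero (Finset.mem_univ i)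
  refine Finset.prod_eq_zero (i := e' i) (Finset.mem_range.mpr hi) ?_
  simp [pts]

lemma span_monomials_top (gen : Fin n ⊕ Fin r → MvPolynomial (Fin n) ℂ)
    (hgen : ∀ g, ∃ D, gen g = monomial (F n (gexp n d r m g)) 1 + D ∧
      (D = 0 ∨ D.totalDegree < ∑ i, gexp n d r m g i)) :
    Submodule.span ℂ (Set.range fun e : (EStd n d r m) =>
      Ideal.Quotient.mk (Ideal.span (Set.range gen))
        (monomial (F n (e : Fin n → ℕ)) (1 : ℂ))) = ⊤ := by
  set J := Ideal.span (Set.range gen) with hJ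
  set V : Set (MvPolynomial (Fin n) ℂ ⧸ J) := Set.range fun e : (EStd n d r m) =>
    Ideal.Quotient.mk J (monomial (F n (e : Fin n → ℕ)) (1 : ℂ)) with hV
  rw [eq_top_iff]
  rintro x -
  obtain ⟨p, rfl⟩ := Ideal.Quotient.mk_surjective x
  suffices H : ∀ N (p : MvPolynomial (Fin n) ℂ), p.totalDegree ≤ N →
      Ideal.Quotient.mk J p ∈ Submodule.span ℂ V from H _ p le_rfl
  intro N
  induction N using Nat.strong_induction_on with
  | _ N IH =>
    intro p hp
    rw [p.as_sum, map_sum]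
    refine Submodule.sum_mem _ fun u hu => ?_
    have hsum_le : (∑ i, u i) ≤ N := by
      have h1 := MvPolynomial.le_totalDegree hu
      rw [Ssum] at h1
      omega
    by_cases hE : (u : Fin n → ℕ) ∈ EStd n d r m
    · have hFu : F n (⇑u) = u := Finsupp.equivFunOnFinite.symm_apply_apply u
      have h2 : (monomial u (coeff u p)) = (coeff u p) • monomial u (1 : ℂ) := by
        rw [smul_monomial, smul_eq_mul, mul_one]
      have hmk : Ideal.Quotient.mk J ((coeff u p) • monomial u (1 : ℂ)) =
          (coeff u p) • Ideal.Quotient.mk J (monomial u (1 : ℂ)) := by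
        rw [← Ideal.Quotient.mkₐ_eq_mk ℂ J]
        exact map_smul _ _ _
      rw [h2, hmk]
      refine Submodule.smul_mem _ _ (Submodule.subset_span ?_)
      exact ⟨⟨⇑u, hE⟩, by dsimp only; rw [hFu]⟩
    · obtain ⟨g, hg⟩ := exists_gexp_le n d r m hE
      obtain ⟨D, hDe, hDdeg⟩ := hgen g
      set w := F n (gexp n d r m g) with hw
      have hwu : w ≤ u := Finsupp.le_def.mpr (fun i => hg i)
      have key : monomial u (coeff u p) =
          monomial (u - w) (coeff u p) * gen g - monomial (u - w) (coeff u p) * D := by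
        rw [hDe, mul_add, monomial_mul, mul_one, tsub_add_cancel_of_le hwu]
        ring
      rw [key, map_sub]
      have hmem : Ideal.Quotient.mk J (monomial (u - w) (coeff u p) * gen g) = 0 := by
        rw [Ideal.Quotient.eq_zero_iff_mem]
        exact Ideal.mul_mem_left _ _ (Ideal.subset_span ⟨g, rfl⟩)
      rw [hmem, zero_sub]
      apply Submodule.neg_mem
      rcases hDdeg with rfl | hlt
      · rw [mul_zero, map_zero]; exact Submodule.zero_mem _
      · refine IH _ ?_ _ le_rfl
        calc (monomial (u - w) (coeff u p) * D).totalDegree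
            ≤ (monomial (u - w) (coeff u p)).totalDegree + D.totalDegree :=
              totalDegree_mul _ _
          _ ≤ (∑ i, (u - w) i) + D.totalDegree := by
              have := deg_monomial_le n (u - w) (coeff u p)
              omega
          _ < (∑ i, (u - w) i) + ∑ i, gexp n d r m g i :=
              Nat.add_lt_add_left hlt _
          _ = ∑ i, u i := by
              rw [← Finset.sum_add_distrib]
              refine Finset.sum_congr rfl fun i _ => ?_
              have h3 : w i ≤ u i := hg i
              rw [Finsupp.tsub_apply]
              have h4 : w i = gexp n d r m g i := rfl
              omega
          _ ≤ N := hsum_le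

lemma finrank_quot (gen : Fin n ⊕ Fin r → MvPolynomial (Fin n) ℂ)
    (hgen : ∀ g, ∃ D, gen g = monomial (F n (gexp n d r m g)) 1 + D ∧
      (D = 0 ∨ D.totalDegree < ∑ i, gexp n d r m g i))
    (v : (EStd n d r m) → MvPolynomial (Fin n) ℂ)
    (hind : LinearIndependent ℂ
      (fun e : (EStd n d r m) => Ideal.Quotient.mk (Ideal.span (Set.range gen)) (v e))) :
    Module.finrank ℂ (MvPolynomial (Fin n) ℂ ⧸ Ideal.span (Set.range gen)) =
      (EStd n d r m).card := by
  have hspan := span_monomials_top n d r m gen hgen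
  have hfin : Module.Finite ℂ (MvPolynomial (Fin n) ℂ ⧸ Ideal.span (Set.range gen)) :=
    Module.finite_def.mpr (Submodule.fg_def.mpr ⟨_, Set.finite_range _, hspan⟩)
  refine le_antisymm ?_ ?_
  · simpa [Fintype.card_coe] using finrank_le_of_span_eq_top hspan
  · simpa [Fintype.card_coe] using hind.fintype_card_le_finrank

lemma indep_phi :
    LinearIndependent ℂ (fun e : (EStd n d r m) =>
      Ideal.Quotient.mk (Ideal.span (Set.range fun g => phi n (gexp n d r m g)))
        (phi n (e : Fin n → ℕ))) := by
  set J := Ideal.span (Set.range fun g => phi n (gexp n d r m g)) with hJ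
  rw [Fintype.linearIndependent_iff]
  intro gc hgc
  have hq : (∑ e : (EStd n d r m), gc e • phi n (e : Fin n → ℕ)) ∈ J := by
    rw [← Ideal.Quotient.eq_zero_iff_mem, ← Ideal.Quotient.mkₐ_eq_mk ℂ J, map_sum]
    simp_rw [map_smul]
    rw [Ideal.Quotient.mkₐ_eq_mk ℂ J]
    exact hgc
  have heval : ∀ e' : (EStd n d r m),
      ∑ e : (EStd n d r m), gc e * eval (pts n (e' : Fin n → ℕ)) (phi n (e : Fin n → ℕ)) = 0 := by
    intro e'
    have hker : J ≤ RingHom.ker (eval (pts n (e' : Fin n → ℕ))) := by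
      rw [hJ, Ideal.span_le]
      rintro _ ⟨g, rfl⟩
      exact eval_gen_zero n d r m e'.2 g
    have h0 : eval (pts n (e' : Fin n → ℕ))
        (∑ e : (EStd n d r m), gc e • phi n (e : Fin n → ℕ)) = 0 := hker hq
    rw [map_sum] at h0
    simpa [smul_eq_C_mul] using h0
  have key : ∀ N (e0 : (EStd n d r m)), (∑ i, (e0 : Fin n → ℕ) i) ≤ N → gc e0 = 0 := by
    intro N
    induction N using Nat.strong_induction_on with
    | _ N IH =>
      intro e0 h0
      have h := heval e0
      rw [Finset.sum_eq_single e0] at h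
      · exact (mul_eq_zero.mp h).resolve_right (eval_phi_ne_zero n _)
      · intro e _ hne
        by_cases hle : ∀ i, (e : Fin n → ℕ) i ≤ (e0 : Fin n → ℕ) i
        · have hne' : ∃ i, (e : Fin n → ℕ) i ≠ (e0 : Fin n → ℕ) i := by
            by_contra hc; push_neg at hc
            exact hne (Subtype.ext (funext hc))
          obtain ⟨i, hi⟩ := hne'
          have hlt : (∑ i, (e : Fin n → ℕ) i) < ∑ i, (e0 : Fin n → ℕ) i :=
            Finset.sum_lt_sum (fun i _ => hle i)
              ⟨i, Finset.mem_univ i, lt_of_le_of_ne (hle i) hi⟩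
          rw [IH _ (lt_of_lt_of_le hlt h0) e le_rfl, zero_mul]
        · rw [eval_phi_zero_of_not_le n hle, mul_zero]
      · intro h; exact absurd (Finset.mem_univ e0) h
  exact fun e0 => key _ e0 le_rfl

lemma indep_mon :
    LinearIndependent ℂ (fun e : (EStd n d r m) =>
      Ideal.Quotient.mk (Ideal.span (Set.range fun g => monomial (F n (gexp n d r m g)) (1 : ℂ)))
        (monomial (F n (e : Fin n → ℕ)) (1 : ℂ))) := by
  set J := Ideal.span (Set.range fun g => monomial (F n (gexp n d r m g)) (1 : ℂ)) with hJ
  rw [Fintype.linearIndependent_iff]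
  intro gc hgc
  have hq : (∑ e : (EStd n d r m), monomial (F n (e : Fin n → ℕ)) (gc e)) ∈ J := by
    rw [← Ideal.Quotient.eq_zero_iff_mem, ← Ideal.Quotient.mkₐ_eq_mk ℂ J, map_sum]
    have : ∀ e : (EStd n d r m), monomial (F n (e : Fin n → ℕ)) (gc e) =
        gc e • monomial (F n (e : Fin n → ℕ)) (1 : ℂ) := by
      intro e; rw [smul_monomial, smul_eq_mul, mul_one]
    simp_rw [this, map_smul]
    rw [Ideal.Quotient.mkₐ_eq_mk ℂ J]
    exact hgc
  have hJ2 : J = Ideal.span ((fun s => monomial s (1 : ℂ)) ''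
      Set.range (fun g => F n (gexp n d r m g))) := by
    rw [hJ, ← Set.range_comp]
    rfl
  rw [hJ2, mem_ideal_span_monomial_image] at hq
  intro e0
  by_contra hne
  have hFsupp : F n (e0 : Fin n → ℕ) ∈
      (∑ e : (EStd n d r m), monomial (F n (e : Fin n → ℕ)) (gc e)).support := by
    rw [mem_support_iff, coeff_sum]
    have hcoeff : ∀ e : (EStd n d r m),
        coeff (F n (e0 : Fin n → ℕ)) (monomial (F n (e : Fin n → ℕ)) (gc e)) =
          if e = e0 then gc e else 0 := by
      intro e
      rw [coeff_monomial]
      by_cases h : e = e0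
      · subst h; simp
      · rw [if_neg h, if_neg]
        intro hF
        exact h (Subtype.ext (Finsupp.equivFunOnFinite.symm.injective hF))
    simp_rw [hcoeff]
    rw [Finset.sum_ite_eq' Finset.univ e0 (fun e => gc e)]
    simpa using hne
  obtain ⟨s, ⟨g, rfl⟩, hle⟩ := hq _ hFsupp
  have hle' : ∀ i, gexp n d r m g i ≤ (e0 : Fin n → ℕ) i := fun i => hle i
  have he0 := (mem_EStd n d r m).mp e0.2
  cases g with
  | inl i =>
    have h4 := hle' i
    simp [gexp] at h4
    have h5 := he0.1 i
    omega
  | inr j =>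
    obtain ⟨i, hi⟩ := he0.2 j
    have := hle' i
    simp only [gexp, Sum.elim_inr] at this
    omega

end Stmt7Aux

/-- **Collapsing reducible hypersurfaces preserves colength.** For a monomial ideal
`I = (x₀^d,…,x_{n-1}^d, m₁,…,m_r)` with `deg mⱼ ≤ d`, the quotient by `I` and the
quotient by `(φₙ(x₀^d),…,φₙ(x_{n-1}^d), φₙ(m₁),…,φₙ(m_r))` have the same dimension
as `k`-vector spaces. -/
theorem stmt_7 (n d r : ℕ) (m : Fin r → (Fin n → ℕ))
    (hdeg : ∀ j, (∑ i, m j i) ≤ d) :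
    Module.finrank ℂ
      (MvPolynomial (Fin n) ℂ ⧸
        Ideal.span ((Set.range fun i : Fin n => (X i : MvPolynomial (Fin n) ℂ) ^ d) ∪
          (Set.range fun j : Fin r =>
            monomial (Finsupp.equivFunOnFinite.symm (m j)) (1 : ℂ)))) =
    Module.finrank ℂ
      (MvPolynomial (Fin n) ℂ ⧸
        Ideal.span ((Set.range fun i : Fin n =>
            phi n (fun i' => if i' = i then d else 0)) ∪
          (Set.range fun j : Fin r => phi n (m j)))) := by
  classical
  open Stmt7Aux in
  have e1 : (Set.range fun i : Fin n => (X i : MvPolynomial (Fin n) ℂ) ^ d) ∪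
      (Set.range fun j : Fin r =>
        monomial (Finsupp.equivFunOnFinite.symm (m j)) (1 : ℂ)) =
      Set.range (fun g => monomial (F n (gexp n d r m g)) (1 : ℂ)) := by
    rw [← range_sum n r (fun g => monomial (F n (gexp n d r m g)) (1 : ℂ))]
    refine congrArg₂ (· ∪ ·) ?_ rfl
    refine congrArg Set.range ?_
    funext i
    show (X i : MvPolynomial (Fin n) ℂ) ^ d = monomial (F n (gexp n d r m (Sum.inl i))) 1
    have hs : (Finsupp.single i d) = F n (gexp n d r m (Sum.inl i)) := by
      ext i'
      show (Finsupp.single i d) i' = (if i' = i then d else 0)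
      by_cases h : i' = i
      · subst h; simp
      · simp [Finsupp.single_apply, h, Ne.symm h]
    rw [X_pow_eq_monomial, hs]
  have e2 : (Set.range fun i : Fin n =>
        phi n (fun i' => if i' = i then d else 0)) ∪
      (Set.range fun j : Fin r => phi n (m j)) =
      Set.range (fun g => phi n (gexp n d r m g)) := by
    rw [← range_sum n r (fun g => phi n (gexp n d r m g))]
    rfl
  rw [e1, e2]
  rw [finrank_quot n d r m _ (fun g => ⟨0, (add_zero _).symm, Or.inl rfl⟩) _
    (indep_mon n d r m)]
  rw [finrank_quot n d r m _ (fun g => phi_decomp n (gexp n d r m g)) _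
    (indep_phi n d r m)]
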